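/- Suppose ℙ(Y=1) = 1/2, the peer reference F_j is Bayesian informative (1 − FNR(F_j) − FPR(F_j) > 0), and F_i is conditionally independent of F_j given Y. Then S̄(F_i, F_j) = (1 − FNR(F_j) − FPR(F_j)) · (ℙ(F_i = Y) − 1/2). Consequently, if F_i' is another classifier conditionally independent of F_j given Y and ℙ(F_i = Y) ≥ ℙ(F_i' = Y), then S̄(F_i, F_j) ≥ S̄(F_i', F_j); i.e., the more accurate classifier receives a higher expected peer-prediction score. -/

import Mathlib

open MeasureTheory

/-- Probability of an event, as a real number. -/
noncomputable def pr {Ω : Type*} [MeasurableSpace Ω] (μ : Measure Ω) (s : Set Ω) : ℝ :=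
  (μ s).toReal

/-- A `{1,2}`-valued random label. -/
def IsBinaryLabel {Ω : Type*} (F : Ω → ℕ) : Prop :=
  ∀ ω, F ω = 1 ∨ F ω = 2

/-- False negative rate: `FNR(F) = ℙ(F=2 ∣ Y=1)`. -/
noncomputable def fnr {Ω : Type*} [MeasurableSpace Ω] (μ : Measure Ω) (F Y : Ω → ℕ) : ℝ :=
  pr μ {ω | F ω = 2 ∧ Y ω = 1} / pr μ {ω | Y ω = 1}

/-- False positive rate: `FPR(F) = ℙ(F=1 ∣ Y=2)`. -/
noncomputable def fpr {Ω : Type*} [MeasurableSpace Ω] (μ : Measure Ω) (F Y : Ω → ℕ) : ℝ :=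
  pr μ {ω | F ω = 1 ∧ Y ω = 2} / pr μ {ω | Y ω = 2}

/-- The Correlated Agreement correlation matrix:
`Δ(F,G)(k,l) = ℙ(F=k, G=l) − ℙ(F=k)·ℙ(G=l)`. -/
noncomputable def caDelta {Ω : Type*} [MeasurableSpace Ω] (μ : Measure Ω)
    (F G : Ω → ℕ) (k l : ℕ) : ℝ :=
  pr μ {ω | F ω = k ∧ G ω = l} - pr μ {ω | F ω = k} * pr μ {ω | G ω = l}

/-- The expected Correlated Agreement score of `F` against `G`:
`S̄(F,G) = ℙ(F = G) − ℙ(F=1)ℙ(G=1) − ℙ(F=2)ℙ(G=2)`. -/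
noncomputable def caScore {Ω : Type*} [MeasurableSpace Ω] (μ : Measure Ω)
    (F G : Ω → ℕ) : ℝ :=
  pr μ {ω | F ω = G ω} - pr μ {ω | F ω = 1} * pr μ {ω | G ω = 1}
    - pr μ {ω | F ω = 2} * pr μ {ω | G ω = 2}

/-- `F` and `G` are conditionally independent given `Y`:
`ℙ(F=k, G=l ∣ Y=y) = ℙ(F=k ∣ Y=y)·ℙ(G=l ∣ Y=y)` for all `k,l,y ∈ {1,2}`. -/
def CondIndepGiven {Ω : Type*} [MeasurableSpace Ω] (μ : Measure Ω)
    (F G Y : Ω → ℕ) : Prop :=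
  ∀ k l y : ℕ, k ∈ ({1, 2} : Set ℕ) → l ∈ ({1, 2} : Set ℕ) → y ∈ ({1, 2} : Set ℕ) →
    pr μ {ω | F ω = k ∧ G ω = l ∧ Y ω = y} / pr μ {ω | Y ω = y} =
      (pr μ {ω | F ω = k ∧ Y ω = y} / pr μ {ω | Y ω = y}) *
        (pr μ {ω | G ω = l ∧ Y ω = y} / pr μ {ω | Y ω = y})


section Aux

variable {Ω : Type*} [MeasurableSpace Ω]

lemma pr_union_of_disjoint (μ : Measure Ω) [IsFiniteMeasure μ] {s t : Set Ω}
    (ht : MeasurableSet t) (hd : Disjoint s t) :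
    pr μ (s ∪ t) = pr μ s + pr μ t := by
  unfold pr
  rw [measure_union hd ht, ENNReal.toReal_add (measure_ne_top μ s) (measure_ne_top μ t)]

lemma pr_split (μ : Measure Ω) [IsFiniteMeasure μ] (G : Ω → ℕ) (hG : Measurable G)
    (hGb : IsBinaryLabel G) (s : Set Ω) (hs : MeasurableSet s) :
    pr μ s = pr μ (s ∩ {ω | G ω = 1}) + pr μ (s ∩ {ω | G ω = 2}) := by
  have hu : s = (s ∩ {ω | G ω = 1}) ∪ (s ∩ {ω | G ω = 2}) := by
    ext ω
    rcases hGb ω with h | h <;> simp [h]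
  have ht : MeasurableSet (s ∩ {ω | G ω = 2}) :=
    hs.inter (hG (measurableSet_singleton 2))
  have hd : Disjoint (s ∩ {ω | G ω = 1}) (s ∩ {ω | G ω = 2}) := by
    rw [Set.disjoint_left]
    rintro ω ⟨-, h1⟩ ⟨-, h2⟩
    simp only [Set.mem_setOf_eq] at h1 h2
    omega
  calc pr μ s = pr μ ((s ∩ {ω | G ω = 1}) ∪ (s ∩ {ω | G ω = 2})) := by rw [← hu]
    _ = _ := pr_union_of_disjoint μ ht hd

lemma alg_identity (a11 a12 a21 a22 b11 b12 b21 b22 : ℝ)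
    (ha1 : a21 = 1/2 - a11) (ha2 : a12 = 1/2 - a22)
    (hb1 : b21 = 1/2 - b11) (hb2 : b12 = 1/2 - b22) :
    (2*a11*b11 + 2*a21*b21 + 2*a12*b12 + 2*a22*b22)
      - (a11 + a12) * (b11 + b12) - (a21 + a22) * (b21 + b22)
      = (1 - 2*b21 - 2*b12) * ((a11 + a22) - 1/2) := by
  subst ha1 ha2 hb1 hb2; ring

lemma caScore_formula (μ : Measure Ω) [IsProbabilityMeasure μ]
    (F Fj Y : Ω → ℕ)
    (hF : Measurable F) (hFj : Measurable Fj) (hY : Measurable Y)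
    (hFb : IsBinaryLabel F) (hFjb : IsBinaryLabel Fj) (hYb : IsBinaryLabel Y)
    (hprior : pr μ {ω | Y ω = 1} = 1 / 2)
    (hci : CondIndepGiven μ F Fj Y) :
    caScore μ F Fj =
      (1 - fnr μ Fj Y - fpr μ Fj Y) * (pr μ {ω | F ω = Y ω} - 1 / 2) := by
  -- basic measurable sets
  have mF : ∀ k : ℕ, MeasurableSet {ω | F ω = k} := fun k => hF (measurableSet_singleton k)
  have mFj : ∀ k : ℕ, MeasurableSet {ω | Fj ω = k} := fun k => hFj (measurableSet_singleton k)
  have mY : ∀ k : ℕ, MeasurableSet {ω | Y ω = k} := fun k => hY (measurableSet_singleton k)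
  -- abbreviations
  set a11 := pr μ {ω | F ω = 1 ∧ Y ω = 1} with ha11
  set a12 := pr μ {ω | F ω = 1 ∧ Y ω = 2} with ha12
  set a21 := pr μ {ω | F ω = 2 ∧ Y ω = 1} with ha21
  set a22 := pr μ {ω | F ω = 2 ∧ Y ω = 2} with ha22
  set b11 := pr μ {ω | Fj ω = 1 ∧ Y ω = 1} with hb11
  set b12 := pr μ {ω | Fj ω = 1 ∧ Y ω = 2} with hb12
  set b21 := pr μ {ω | Fj ω = 2 ∧ Y ω = 1} with hb21
  set b22 := pr μ {ω | Fj ω = 2 ∧ Y ω = 2} with hb22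
  -- ℙ(Y=2) = 1/2
  have huniv : pr μ (Set.univ : Set Ω) = 1 := by simp [pr]
  have hsplitY := pr_split μ Y hY hYb Set.univ MeasurableSet.univ
  rw [Set.univ_inter, Set.univ_inter, huniv] at hsplitY
  have hY2 : pr μ {ω | Y ω = 2} = 1 / 2 := by rw [hprior] at hsplitY; linarith
  -- marginals of F
  have hF1 : pr μ {ω | F ω = 1} = a11 + a12 := by
    have h := pr_split μ Y hY hYb {ω | F ω = 1} (mF 1)
    exact h
  have hF2 : pr μ {ω | F ω = 2} = a21 + a22 := pr_split μ Y hY hYb {ω | F ω = 2} (mF 2)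
  have hFj1 : pr μ {ω | Fj ω = 1} = b11 + b12 := pr_split μ Y hY hYb {ω | Fj ω = 1} (mFj 1)
  have hFj2 : pr μ {ω | Fj ω = 2} = b21 + b22 := pr_split μ Y hY hYb {ω | Fj ω = 2} (mFj 2)
  -- column sums
  have hcol1 : a11 + a21 = 1/2 := by
    have h := pr_split μ F hF hFb {ω | Y ω = 1} (mY 1)
    have e1 : ({ω | Y ω = 1} ∩ {ω | F ω = 1} : Set Ω) = {ω | F ω = 1 ∧ Y ω = 1} := by
      ext ω; simp only [Set.mem_inter_iff, Set.mem_setOf_eq]; tauto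
    have e2 : ({ω | Y ω = 1} ∩ {ω | F ω = 2} : Set Ω) = {ω | F ω = 2 ∧ Y ω = 1} := by
      ext ω; simp only [Set.mem_inter_iff, Set.mem_setOf_eq]; tauto
    rw [e1, e2, hprior] at h
    linarith [h]
  have hcol2 : a12 + a22 = 1/2 := by
    have h := pr_split μ F hF hFb {ω | Y ω = 2} (mY 2)
    have e1 : ({ω | Y ω = 2} ∩ {ω | F ω = 1} : Set Ω) = {ω | F ω = 1 ∧ Y ω = 2} := by
      ext ω; simp only [Set.mem_inter_iff, Set.mem_setOf_eq]; tauto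
    have e2 : ({ω | Y ω = 2} ∩ {ω | F ω = 2} : Set Ω) = {ω | F ω = 2 ∧ Y ω = 2} := by
      ext ω; simp only [Set.mem_inter_iff, Set.mem_setOf_eq]; tauto
    rw [e1, e2, hY2] at h
    linarith [h]
  have hcol3 : b11 + b21 = 1/2 := by
    have h := pr_split μ Fj hFj hFjb {ω | Y ω = 1} (mY 1)
    have e1 : ({ω | Y ω = 1} ∩ {ω | Fj ω = 1} : Set Ω) = {ω | Fj ω = 1 ∧ Y ω = 1} := by
      ext ω; simp only [Set.mem_inter_iff, Set.mem_setOf_eq]; tauto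
    have e2 : ({ω | Y ω = 1} ∩ {ω | Fj ω = 2} : Set Ω) = {ω | Fj ω = 2 ∧ Y ω = 1} := by
      ext ω; simp only [Set.mem_inter_iff, Set.mem_setOf_eq]; tauto
    rw [e1, e2, hprior] at h
    linarith [h]
  have hcol4 : b12 + b22 = 1/2 := by
    have h := pr_split μ Fj hFj hFjb {ω | Y ω = 2} (mY 2)
    have e1 : ({ω | Y ω = 2} ∩ {ω | Fj ω = 1} : Set Ω) = {ω | Fj ω = 1 ∧ Y ω = 2} := by
      ext ω; simp only [Set.mem_inter_iff, Set.mem_setOf_eq]; tauto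
    have e2 : ({ω | Y ω = 2} ∩ {ω | Fj ω = 2} : Set Ω) = {ω | Fj ω = 2 ∧ Y ω = 2} := by
      ext ω; simp only [Set.mem_inter_iff, Set.mem_setOf_eq]; tauto
    rw [e1, e2, hY2] at h
    linarith [h]
  -- conditional independence gives the joint atoms
  have hmem1 : (1 : ℕ) ∈ ({1, 2} : Set ℕ) := by simp
  have hmem2 : (2 : ℕ) ∈ ({1, 2} : Set ℕ) := by simp
  have hatom : ∀ k l y : ℕ, k ∈ ({1,2} : Set ℕ) → l ∈ ({1,2} : Set ℕ) → y ∈ ({1,2} : Set ℕ) →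
      pr μ {ω | F ω = k ∧ Fj ω = l ∧ Y ω = y} =
        2 * (pr μ {ω | F ω = k ∧ Y ω = y}) * (pr μ {ω | Fj ω = l ∧ Y ω = y}) := by
    intro k l y hk hl hy
    have h := hci k l y hk hl hy
    have hYy : pr μ {ω | Y ω = y} = 1/2 := by
      rcases hy with hy | hy
      · subst hy; exact hprior
      · simp only [Set.mem_singleton_iff] at hy; subst hy; exact hY2
    rw [hYy] at h
    have h2 : (2:ℝ) ≠ 0 := by norm_num
    field_simp at h
    linarith [h]
  have hp111 := hatom 1 1 1 hmem1 hmem1 hmem1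
  have hp221 := hatom 2 2 1 hmem2 hmem2 hmem1
  have hp112 := hatom 1 1 2 hmem1 hmem1 hmem2
  have hp222 := hatom 2 2 2 hmem2 hmem2 hmem2
  -- agreement probability
  have hagree : pr μ {ω | F ω = Fj ω} =
      pr μ {ω | F ω = 1 ∧ Fj ω = 1 ∧ Y ω = 1} + pr μ {ω | F ω = 1 ∧ Fj ω = 1 ∧ Y ω = 2}
      + (pr μ {ω | F ω = 2 ∧ Fj ω = 2 ∧ Y ω = 1} + pr μ {ω | F ω = 2 ∧ Fj ω = 2 ∧ Y ω = 2}) := by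
    have hu : {ω | F ω = Fj ω} =
        ({ω | F ω = 1} ∩ {ω | Fj ω = 1}) ∪ ({ω | F ω = 2} ∩ {ω | Fj ω = 2}) := by
      ext ω
      simp only [Set.mem_setOf_eq, Set.mem_union, Set.mem_inter_iff]
      rcases hFb ω with h | h <;> rcases hFjb ω with h' | h' <;> simp [h, h'] <;> omega
    have ht : MeasurableSet ({ω | F ω = 2} ∩ {ω | Fj ω = 2}) := (mF 2).inter (mFj 2)
    have hd : Disjoint ({ω | F ω = 1} ∩ {ω | Fj ω = 1}) ({ω | F ω = 2} ∩ {ω | Fj ω = 2}) := by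
      rw [Set.disjoint_left]
      rintro ω ⟨h1, -⟩ ⟨h2, -⟩
      simp only [Set.mem_setOf_eq] at h1 h2
      omega
    rw [hu, pr_union_of_disjoint μ ht hd]
    have h1 := pr_split μ Y hY hYb ({ω | F ω = 1} ∩ {ω | Fj ω = 1}) ((mF 1).inter (mFj 1))
    have h2 := pr_split μ Y hY hYb ({ω | F ω = 2} ∩ {ω | Fj ω = 2}) ((mF 2).inter (mFj 2))
    have e : ∀ k y : ℕ, (({ω | F ω = k} ∩ {ω | Fj ω = k}) ∩ {ω | Y ω = y} : Set Ω)
        = {ω | F ω = k ∧ Fj ω = k ∧ Y ω = y} := by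
      intro k y
      ext ω
      simp only [Set.mem_inter_iff, Set.mem_setOf_eq]
      tauto
    rw [e 1 1, e 1 2] at h1
    rw [e 2 1, e 2 2] at h2
    rw [h1, h2]
  -- accuracy
  have hacc : pr μ {ω | F ω = Y ω} = a11 + a22 := by
    have hu : {ω | F ω = Y ω} = {ω | F ω = 1 ∧ Y ω = 1} ∪ {ω | F ω = 2 ∧ Y ω = 2} := by
      ext ω
      simp only [Set.mem_setOf_eq, Set.mem_union]
      rcases hFb ω with h | h <;> rcases hYb ω with h' | h' <;> simp [h, h'] <;> omega
    have ht : MeasurableSet {ω | F ω = 2 ∧ Y ω = 2} := (mF 2).inter (mY 2)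
    have hd : Disjoint {ω | F ω = 1 ∧ Y ω = 1} {ω | F ω = 2 ∧ Y ω = 2} := by
      rw [Set.disjoint_left]
      rintro ω ⟨h1, -⟩ ⟨h2, -⟩
      omega
    rw [hu, pr_union_of_disjoint μ ht hd]
  -- fnr and fpr
  have hfnr : fnr μ Fj Y = 2 * b21 := by
    unfold fnr; rw [hprior, ← hb21]; ring_nf
  have hfpr : fpr μ Fj Y = 2 * b12 := by
    unfold fpr; rw [hY2, ← hb12]; ring_nf
  -- put it all together
  unfold caScore
  rw [hagree, hp111, hp221, hp112, hp222, hF1, hF2, hFj1, hFj2, hacc, hfnr, hfpr]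
  have := alg_identity a11 a12 a21 a22 b11 b12 b21 b22
    (by linarith) (by linarith) (by linarith) (by linarith)
  linarith [this]

end Aux

/-- under a uniform prior, with a Bayesian informative peer reference
`F_j` and `F_i` conditionally independent of `F_j` given `Y`,
`S̄(F_i,F_j) = (1 − FNR(F_j) − FPR(F_j)) · (ℙ(F_i = Y) − 1/2)`; consequently the more
accurate classifier receives a higher expected peer-prediction score. -/
theorem peer_prediction_rewards_accuracy
    {Ω : Type*} [MeasurableSpace Ω] (μ : Measure Ω) [IsProbabilityMeasure μ]
    (Fi Fj Y : Ω → ℕ)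
    (hFimeas : Measurable Fi) (hFjmeas : Measurable Fj) (hYmeas : Measurable Y)
    (hFibin : IsBinaryLabel Fi) (hFjbin : IsBinaryLabel Fj) (hYbin : IsBinaryLabel Y)
    (hY1pos : 0 < pr μ {ω | Y ω = 1}) (hY1lt : pr μ {ω | Y ω = 1} < 1)
    (hprior : pr μ {ω | Y ω = 1} = 1 / 2)
    (hinfj : 0 < 1 - fnr μ Fj Y - fpr μ Fj Y)
    (hci : CondIndepGiven μ Fi Fj Y) :
    caScore μ Fi Fj =
        (1 - fnr μ Fj Y - fpr μ Fj Y) * (pr μ {ω | Fi ω = Y ω} - 1 / 2) ∧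
      ∀ Fi' : Ω → ℕ, Measurable Fi' → IsBinaryLabel Fi' →
        CondIndepGiven μ Fi' Fj Y →
        pr μ {ω | Fi' ω = Y ω} ≤ pr μ {ω | Fi ω = Y ω} →
        caScore μ Fi' Fj ≤ caScore μ Fi Fj := by
  have key := caScore_formula μ Fi Fj Y hFimeas hFjmeas hYmeas hFibin hFjbin hYbin hprior hci
  refine ⟨key, ?_⟩
  intro Fi' hFi'meas hFi'bin hci' hacc
  have key' := caScore_formula μ Fi' Fj Y hFi'meas hFjmeas hYmeas hFi'bin hFjbin hYbin hprior hci'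
  rw [key, key']
  have := mul_le_mul_of_nonneg_left (sub_le_sub_right hacc (1/2:ℝ)) (le_of_lt hinfj)
  linarith
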